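/- For every n ≥ 0, the collection Γ(P_n) of all finite subsets of V_{P_n} whose elements are pairwise adjacent is a flag simplicial complex whose number of faces of cardinality i equals n!/(i!·i!·(n−2i)!) for 0 ≤ i ≤ n/2 and 0 for i > n/2. Consequently the γ-vector of the simplicial complex dual to the cyclohedron is the f-vector of a flag simplicial complex and satisfies the Kruskal–Katona inequalities. -/

import Mathlib

open Finset

attribute [local instance] Classical.propDecidable

/-- The vertex set `V_{P_n} = {(l,r) ∈ [n] × [n] : l ≠ r}`. -/
def VPn (n : ℕ) : Finset (ℕ × ℕ) :=
  ((Finset.Icc 1 n) ×ˢ (Finset.Icc 1 n)).filter fun p => p.1 ≠ p.2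

/-- `(l₁,r₁)` and `(l₂,r₂)` are adjacent: `l₁, l₂, r₁, r₂` are pairwise distinct
and `l₁ < l₂ ↔ r₁ < r₂`. -/
def AdjP (p q : ℕ × ℕ) : Prop :=
  p.1 ≠ q.1 ∧ p.1 ≠ q.2 ∧ p.2 ≠ q.1 ∧ p.2 ≠ q.2 ∧ (p.1 < q.1 ↔ p.2 < q.2)

/-- `Γ(P_n)`: the collection of all subsets of `V_{P_n}` whose elements are
pairwise adjacent. -/
noncomputable def GammaPn (n : ℕ) : Finset (Finset (ℕ × ℕ)) :=
  (VPn n).powerset.filter fun S => ∀ p ∈ S, ∀ q ∈ S, p ≠ q → AdjP p q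

def IsFace (S : Finset (ℕ × ℕ)) : Prop := ∀ p ∈ S, ∀ q ∈ S, p ≠ q → AdjP p q

lemma mem_GammaPn {n : ℕ} {S : Finset (ℕ × ℕ)} :
    S ∈ GammaPn n ↔ S ⊆ VPn n ∧ IsFace S := by
  simp [GammaPn, IsFace, Finset.mem_filter, Finset.mem_powerset]

lemma face_fst_injOn {S : Finset (ℕ × ℕ)} (h : IsFace S) :
    ∀ p ∈ S, ∀ q ∈ S, p.1 = q.1 → p = q := by
  intro p hp q hq he
  by_contra hne
  exact (h p hp q hq hne).1 he

lemma face_snd_injOn {S : Finset (ℕ × ℕ)} (h : IsFace S) :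
    ∀ p ∈ S, ∀ q ∈ S, p.2 = q.2 → p = q := by
  intro p hp q hq he
  by_contra hne
  exact (h p hp q hq hne).2.2.2.1 he

lemma face_lt_iff {S : Finset (ℕ × ℕ)} (h : IsFace S) {a b : ℕ} (hab : (a, b) ∈ S)
    {p : ℕ × ℕ} (hp : p ∈ S) : p.1 < a ↔ p.2 < b := by
  by_cases he : p = (a, b)
  · subst he; simp
  · exact (h p hp (a, b) hab he).2.2.2.2

lemma face_rank {S : Finset (ℕ × ℕ)} (h : IsFace S) {a b : ℕ} (hab : (a, b) ∈ S) :
    ((S.image Prod.fst).filter (· < a)).card = ((S.image Prod.snd).filter (· < b)).card := by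
  have h1 : (S.image Prod.fst).filter (· < a) = (S.filter fun p => p.1 < a).image Prod.fst := by
    ext c
    simp only [Finset.mem_filter, Finset.mem_image]
    constructor
    · rintro ⟨⟨p, hp, rfl⟩, hc⟩; exact ⟨p, ⟨hp, hc⟩, rfl⟩
    · rintro ⟨p, ⟨hp, hc⟩, rfl⟩; exact ⟨⟨p, hp, rfl⟩, hc⟩
  have h2 : (S.image Prod.snd).filter (· < b) = (S.filter fun p => p.2 < b).image Prod.snd := by
    ext c
    simp only [Finset.mem_filter, Finset.mem_image]
    constructor
    · rintro ⟨⟨p, hp, rfl⟩, hc⟩; exact ⟨p, ⟨hp, hc⟩, rfl⟩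
    · rintro ⟨p, ⟨hp, hc⟩, rfl⟩; exact ⟨⟨p, hp, rfl⟩, hc⟩
  have h3 : (S.filter fun p => p.1 < a) = (S.filter fun p => p.2 < b) := by
    apply Finset.filter_congr
    intro p hp
    simpa using face_lt_iff h hab hp
  rw [h1, h2, h3]
  rw [Finset.card_image_of_injOn, Finset.card_image_of_injOn]
  · intro p hp q hq he
    exact face_snd_injOn h p (Finset.mem_of_mem_filter _ hp) q (Finset.mem_of_mem_filter _ hq) he
  · intro p hp q hq he
    exact face_fst_injOn h p (Finset.mem_of_mem_filter _ (h3 ▸ hp)) q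
      (Finset.mem_of_mem_filter _ (h3 ▸ hq)) he

lemma card_filter_lt_inj {R : Finset ℕ} {b b' : ℕ} (hb : b ∈ R) (hb' : b' ∈ R)
    (h : (R.filter (· < b)).card = (R.filter (· < b')).card) : b = b' := by
  rcases lt_trichotomy b b' with hlt | he | hlt
  · exfalso
    have hss : R.filter (· < b) ⊂ R.filter (· < b') := by
      refine Finset.ssubset_iff_of_subset ?_ |>.2 ?_
      · exact Finset.monotone_filter_right R (fun x _ hx => lt_trans hx hlt)
      · exact ⟨b, Finset.mem_filter.2 ⟨hb, hlt⟩, by simp⟩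
    exact absurd h (Nat.ne_of_lt (Finset.card_lt_card hss))
  · exact he
  · exfalso
    have hss : R.filter (· < b') ⊂ R.filter (· < b) := by
      refine Finset.ssubset_iff_of_subset ?_ |>.2 ?_
      · exact Finset.monotone_filter_right R (fun x _ hx => lt_trans hx hlt)
      · exact ⟨b', Finset.mem_filter.2 ⟨hb', hlt⟩, by simp⟩
    exact absurd h.symm (Nat.ne_of_lt (Finset.card_lt_card hss))

lemma face_subset_of_images {S T : Finset (ℕ × ℕ)} (hS : IsFace S) (hT : IsFace T)
    (h1 : S.image Prod.fst = T.image Prod.fst) (h2 : S.image Prod.snd = T.image Prod.snd) :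
    S ⊆ T := by
  intro p hp
  obtain ⟨a, b⟩ := p
  have ha : a ∈ T.image Prod.fst := h1 ▸ Finset.mem_image_of_mem Prod.fst hp
  obtain ⟨q, hq, hq1⟩ := Finset.mem_image.1 ha
  obtain ⟨a', b'⟩ := q
  simp only at hq1
  subst hq1
  have hrS := face_rank hS hp
  have hrT := face_rank hT hq
  rw [h1, h2] at hrS
  have hbR : b ∈ T.image Prod.snd := h2 ▸ Finset.mem_image_of_mem Prod.snd hp
  have hb'R : b' ∈ T.image Prod.snd := Finset.mem_image_of_mem Prod.snd hq
  have hbb : b = b' := card_filter_lt_inj hbR hb'R (hrS.symm.trans hrT)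
  subst hbb; exact hq

lemma face_eq_of_images {S T : Finset (ℕ × ℕ)} (hS : IsFace S) (hT : IsFace T)
    (h1 : S.image Prod.fst = T.image Prod.fst) (h2 : S.image Prod.snd = T.image Prod.snd) :
    S = T :=
  Finset.Subset.antisymm (face_subset_of_images hS hT h1 h2)
    (face_subset_of_images hT hS h1.symm h2.symm)

noncomputable def ofLR (L R : Finset ℕ) : Finset (ℕ × ℕ) :=
  ((L.sort (· ≤ ·)).zip (R.sort (· ≤ ·))).toFinset

lemma ofLR_spec {L R : Finset ℕ} (hcard : L.card = R.card) (hd : Disjoint L R) :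
    IsFace (ofLR L R) ∧ (ofLR L R).image Prod.fst = L ∧ (ofLR L R).image Prod.snd = R ∧
      (ofLR L R).card = L.card := by
  set l := L.sort (· ≤ ·) with hl
  set r := R.sort (· ≤ ·) with hr
  have hlen : l.length = r.length := by
    rw [hl, hr, Finset.length_sort, Finset.length_sort, hcard]
  have hmapfst : (l.zip r).map Prod.fst = l := List.map_fst_zip hlen.le
  have hmapsnd : (l.zip r).map Prod.snd = r := List.map_snd_zip hlen.ge
  have hnodl : l.Nodup := Finset.sort_nodup _ _
  have hnod : (l.zip r).Nodup := List.Nodup.of_map Prod.fst (hmapfst.symm ▸ hnodl)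
  have hsl : List.SortedLT l := Finset.sortedLT_sort L
  have hsr : List.SortedLT r := Finset.sortedLT_sort R
  have hgl := hsl.strictMono_get
  have hgr := hsr.strictMono_get
  refine ⟨?_, ?_, ?_, ?_⟩
  · -- IsFace
    intro p hp q hq hne
    rw [ofLR, List.mem_toFinset, List.mem_iff_get] at hp hq
    obtain ⟨k, hk⟩ := hp
    obtain ⟨k', hk'⟩ := hq
    have hkl : (k : ℕ) < min l.length r.length :=
      lt_of_lt_of_eq k.isLt (List.length_zip (l₁ := l) (l₂ := r))
    have hk'l : (k' : ℕ) < min l.length r.length :=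
      lt_of_lt_of_eq k'.isLt (List.length_zip (l₁ := l) (l₂ := r))
    have hi : (k : ℕ) < l.length := by omega
    have hi' : (k : ℕ) < r.length := by omega
    have hj : (k' : ℕ) < l.length := by omega
    have hj' : (k' : ℕ) < r.length := by omega
    rw [List.get_eq_getElem, List.getElem_zip] at hk hk'
    have hp1 : p.1 = l.get ⟨(k : ℕ), hi⟩ := by rw [← hk]; rfl
    have hp2 : p.2 = r.get ⟨(k : ℕ), hi'⟩ := by rw [← hk]; rfl
    have hq1 : q.1 = l.get ⟨(k' : ℕ), hj⟩ := by rw [← hk']; rfl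
    have hq2 : q.2 = r.get ⟨(k' : ℕ), hj'⟩ := by rw [← hk']; rfl
    have hne' : (k : ℕ) ≠ (k' : ℕ) := by
      intro he
      apply hne
      rw [← hk, ← hk']
      exact congrArg₂ Prod.mk (congrArg l.get (Fin.ext he)) (congrArg r.get (Fin.ext he))
    have hfl : (⟨(k : ℕ), hi⟩ : Fin l.length) ≠ ⟨(k' : ℕ), hj⟩ :=
      fun h => hne' (by simpa using congrArg Fin.val h)
    have hfr : (⟨(k : ℕ), hi'⟩ : Fin r.length) ≠ ⟨(k' : ℕ), hj'⟩ :=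
      fun h => hne' (by simpa using congrArg Fin.val h)
    have hp1L : p.1 ∈ L := by
      rw [hp1]; exact (Finset.mem_sort _).1 (List.get_mem l _)
    have hq1L : q.1 ∈ L := by
      rw [hq1]; exact (Finset.mem_sort _).1 (List.get_mem l _)
    have hp2R : p.2 ∈ R := by
      rw [hp2]; exact (Finset.mem_sort _).1 (List.get_mem r _)
    have hq2R : q.2 ∈ R := by
      rw [hq2]; exact (Finset.mem_sort _).1 (List.get_mem r _)
    refine ⟨?_, ?_, ?_, ?_, ?_⟩
    · rw [hp1, hq1]; exact fun h => hfl (hgl.injective h)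
    · exact fun h => (Finset.disjoint_left.1 hd hp1L) (h ▸ hq2R)
    · exact fun h => (Finset.disjoint_left.1 hd hq1L) (h ▸ hp2R)
    · rw [hp2, hq2]; exact fun h => hfr (hgr.injective h)
    · rw [hp1, hq1, hp2, hq2, hgl.lt_iff_lt, hgr.lt_iff_lt, Fin.mk_lt_mk, Fin.mk_lt_mk]
  · ext a
    simp only [ofLR, Finset.mem_image, List.mem_toFinset]
    constructor
    · rintro ⟨p, hp, rfl⟩
      exact (Finset.mem_sort _).1 (hmapfst ▸ List.mem_map_of_mem (f := Prod.fst) hp)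
    · intro ha
      have hm : a ∈ (l.zip r).map Prod.fst := hmapfst.symm ▸ (Finset.mem_sort _).2 ha
      obtain ⟨p, hp, he⟩ := List.mem_map.1 hm
      exact ⟨p, hp, he⟩
  · ext a
    simp only [ofLR, Finset.mem_image, List.mem_toFinset]
    constructor
    · rintro ⟨p, hp, rfl⟩
      exact (Finset.mem_sort _).1 (hmapsnd ▸ List.mem_map_of_mem (f := Prod.snd) hp)
    · intro ha
      have hm : a ∈ (l.zip r).map Prod.snd := hmapsnd.symm ▸ (Finset.mem_sort _).2 ha
      obtain ⟨p, hp, he⟩ := List.mem_map.1 hm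
      exact ⟨p, hp, he⟩
  · rw [ofLR, List.toFinset_card_of_nodup hnod, List.length_zip, hlen, min_self]
    rw [hr, Finset.length_sort]
    exact hcard.symm

lemma ofLR_mem {L R : Finset ℕ} (p : ℕ × ℕ) (hp : p ∈ ofLR L R) : p.1 ∈ L ∧ p.2 ∈ R := by
  rw [ofLR, List.mem_toFinset] at hp
  obtain ⟨hl, hr⟩ := List.of_mem_zip (a := p.1) (b := p.2) hp
  exact ⟨(Finset.mem_sort _).1 hl, (Finset.mem_sort _).1 hr⟩

lemma mem_VPn {n : ℕ} {p : ℕ × ℕ} :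
    p ∈ VPn n ↔ p.1 ∈ Finset.Icc 1 n ∧ p.2 ∈ Finset.Icc 1 n ∧ p.1 ≠ p.2 := by
  simp only [VPn, Finset.mem_filter, Finset.mem_product]
  tauto

lemma card_faces (n i : ℕ) :
    ((GammaPn n).filter fun S => S.card = i).card = n.choose i * (n - i).choose i := by
  classical
  set t : Finset (Finset ℕ × Finset ℕ) :=
    ((Finset.Icc 1 n).powersetCard i).biUnion
      (fun L => (((Finset.Icc 1 n) \ L).powersetCard i).image fun R => (L, R)) with ht
  have hmem_t : ∀ P : Finset ℕ × Finset ℕ, P ∈ t ↔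
      P.1 ⊆ Finset.Icc 1 n ∧ P.1.card = i ∧ P.2 ⊆ Finset.Icc 1 n ∧ P.2.card = i ∧
        Disjoint P.1 P.2 := by
    rintro ⟨L, R⟩
    simp only [ht, Finset.mem_biUnion, Finset.mem_image, Finset.mem_powersetCard]
    constructor
    · rintro ⟨L', ⟨hL'sub, hL'card⟩, R', ⟨hR'sub, hR'card⟩, he⟩
      rw [Prod.mk.injEq] at he
      obtain ⟨rfl, rfl⟩ := he
      refine ⟨hL'sub, hL'card, hR'sub.trans Finset.sdiff_subset, hR'card, ?_⟩
      rw [Finset.disjoint_left]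
      intro x hxL hxR
      exact (Finset.mem_sdiff.1 (hR'sub hxR)).2 hxL
    · rintro ⟨h1, h2, h3, h4, h5⟩
      refine ⟨L, ⟨h1, h2⟩, R, ⟨fun x hx => Finset.mem_sdiff.2 ⟨h3 hx, ?_⟩, h4⟩, rfl⟩
      exact Finset.disjoint_right.1 h5 hx
  have hcard_t : t.card = n.choose i * (n - i).choose i := by
    rw [ht, Finset.card_biUnion]
    · have hconst : ∀ L ∈ (Finset.Icc 1 n).powersetCard i,
          ((((Finset.Icc 1 n) \ L).powersetCard i).image fun R => (L, R)).card
            = (n - i).choose i := by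
        intro L hL
        rw [Finset.mem_powersetCard] at hL
        rw [Finset.card_image_of_injective _ (fun R R' h => (Prod.mk.injEq .. ▸ h).2),
          Finset.card_powersetCard, Finset.card_sdiff_of_subset hL.1, Nat.card_Icc, hL.2]
        norm_num
      rw [Finset.sum_congr rfl hconst, Finset.sum_const, Finset.card_powersetCard,
        Nat.card_Icc, smul_eq_mul]
      norm_num
    · intro L hL L' hL' hne
      rw [Function.onFun, Finset.disjoint_left]
      rintro P hP hP'
      obtain ⟨R, _, rfl⟩ := Finset.mem_image.1 hP
      obtain ⟨R', _, he⟩ := Finset.mem_image.1 hP'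
      exact hne ((Prod.mk.injEq .. ▸ he).1).symm
  rw [← hcard_t]
  apply Finset.card_bij (fun S _ => (S.image Prod.fst, S.image Prod.snd))
  · intro S hS
    rw [Finset.mem_filter] at hS
    obtain ⟨hSG, hScard⟩ := hS
    rw [mem_GammaPn] at hSG
    obtain ⟨hSsub, hSface⟩ := hSG
    rw [hmem_t]
    refine ⟨?_, ?_, ?_, ?_, ?_⟩
    · intro x hx
      obtain ⟨p, hp, rfl⟩ := Finset.mem_image.1 hx
      exact (mem_VPn.1 (hSsub hp)).1
    · rw [Finset.card_image_of_injOn, hScard]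
      intro p hp q hq he
      exact face_fst_injOn hSface p hp q hq he
    · intro x hx
      obtain ⟨p, hp, rfl⟩ := Finset.mem_image.1 hx
      exact (mem_VPn.1 (hSsub hp)).2.1
    · rw [Finset.card_image_of_injOn, hScard]
      intro p hp q hq he
      exact face_snd_injOn hSface p hp q hq he
    · rw [Finset.disjoint_left]
      intro x hx hx'
      obtain ⟨p, hp, rfl⟩ := Finset.mem_image.1 hx
      obtain ⟨q, hq, he⟩ := Finset.mem_image.1 hx'
      by_cases hpq : p = q
      · subst hpq
        exact (mem_VPn.1 (hSsub hp)).2.2 he.symm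
      · exact (hSface p hp q hq hpq).2.1 he.symm
  · intro S hS T hT he
    rw [Finset.mem_filter, mem_GammaPn] at hS hT
    rw [Prod.mk.injEq] at he
    exact face_eq_of_images hS.1.2 hT.1.2 he.1 he.2
  · rintro ⟨L, R⟩ hLR
    rw [hmem_t] at hLR
    obtain ⟨h1, h2, h3, h4, h5⟩ := hLR
    have hcard : L.card = R.card := h2.trans h4.symm
    obtain ⟨hface, hfst, hsnd, hc⟩ := ofLR_spec hcard h5
    refine ⟨ofLR L R, ?_, ?_⟩
    · rw [Finset.mem_filter, mem_GammaPn]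
      refine ⟨⟨?_, hface⟩, hc.trans h2⟩
      intro p hp
      obtain ⟨hpL, hpR⟩ := ofLR_mem p hp
      rw [mem_VPn]
      exact ⟨h1 hpL, h3 hpR, fun h => Finset.disjoint_left.1 h5 hpL (h ▸ hpR)⟩
    · rw [Prod.mk.injEq]
      exact ⟨hfst, hsnd⟩

lemma choose_formula {n i : ℕ} (h : 2 * i ≤ n) :
    n.choose i * (n - i).choose i =
      n.factorial / (i.factorial * i.factorial * (n - 2 * i).factorial) := by
  have hi : i ≤ n := by omega
  have hi2 : i ≤ n - i := by omega
  have h1 := Nat.choose_mul_factorial_mul_factorial hi2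
  have h2 := Nat.choose_mul_factorial_mul_factorial hi
  have hn2 : n - 2 * i = n - i - i := by omega
  have key : n.choose i * (n - i).choose i *
      (i.factorial * i.factorial * (n - 2 * i).factorial) = n.factorial := by
    rw [hn2]
    calc n.choose i * (n - i).choose i * (i.factorial * i.factorial * (n - i - i).factorial)
        = n.choose i * i.factorial * ((n - i).choose i * i.factorial * (n - i - i).factorial) := by
          ring
      _ = n.choose i * i.factorial * (n - i).factorial := by rw [h1]
      _ = n.factorial := h2
  exact (Nat.div_eq_of_eq_mul_left (by positivity) key.symm).symm

/-- `Γ(P_n)` is a flag simplicial complex whose number of faces of cardinality `i`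
is `n!/(i!·i!·(n-2i)!)` for `0 ≤ i ≤ n/2` and `0` for `i > n/2`.  Consequently the
`γ`-vector of the simplicial complex dual to the cyclohedron is the `f`-vector of a
flag simplicial complex and satisfies the Kruskal–Katona inequalities. -/
theorem cyclohedron_gamma_complex (n : ℕ) :
    ∅ ∈ GammaPn n ∧
    (∀ F ∈ GammaPn n, ∀ G ⊆ F, G ∈ GammaPn n) ∧
    (∀ v ∈ VPn n, ({v} : Finset (ℕ × ℕ)) ∈ GammaPn n) ∧
    (∀ S : Finset (ℕ × ℕ),
      (∀ p ∈ S, ({p} : Finset (ℕ × ℕ)) ∈ GammaPn n) →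
      (∀ p ∈ S, ∀ q ∈ S, p ≠ q → ({p, q} : Finset (ℕ × ℕ)) ∈ GammaPn n) →
      S ∈ GammaPn n) ∧
    (∀ i : ℕ, ((GammaPn n).filter fun S => S.card = i).card =
      if 2 * i ≤ n then
        n.factorial / (i.factorial * i.factorial * (n - 2 * i).factorial)
      else 0) := by
  refine ⟨?_, ?_, ?_, ?_, ?_⟩
  · rw [mem_GammaPn]
    exact ⟨Finset.empty_subset _, fun p hp => absurd hp (Finset.notMem_empty p)⟩
  · intro F hF G hG
    rw [mem_GammaPn] at hF ⊢
    exact ⟨hG.trans hF.1, fun p hp q hq hne => hF.2 p (hG hp) q (hG hq) hne⟩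
  · intro v hv
    rw [mem_GammaPn]
    refine ⟨Finset.singleton_subset_iff.2 hv, ?_⟩
    intro p hp q hq hne
    rw [Finset.mem_singleton] at hp hq
    exact absurd (hp.trans hq.symm) hne
  · intro S h1 h2
    rw [mem_GammaPn]
    constructor
    · intro p hp
      have := mem_GammaPn.1 (h1 p hp)
      exact this.1 (Finset.mem_singleton_self p)
    · intro p hp q hq hne
      have := mem_GammaPn.1 (h2 p hp q hq hne)
      exact this.2 p (Finset.mem_insert_self p {q}) q
        (Finset.mem_insert_of_mem (Finset.mem_singleton_self q)) hne
  · intro i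
    rw [card_faces]
    by_cases h : 2 * i ≤ n
    · rw [if_pos h, choose_formula h]
    · rw [if_neg h, show (n - i).choose i = 0 from Nat.choose_eq_zero_of_lt (by omega), mul_zero]
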